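/- Let w be a weight function, let C2 = C1 ∪ D where C1 and D are disjoint and |D| = t, and let A be an approval profile over C2 such that D ⊆ A(v) for every voter v. Then for every H ⊆ C2 with |H| = k + t there exists F ⊆ H ∖ D with |F| = k and s_w(A, F ∪ D) ≥ s_w(A, H). -/
import Mathlib


open Finset

variable {V C : Type*}

/-- The `w`-Thiele score of a set `S` under approval profile `A`. -/
def thieleScore [Fintype V] [DecidableEq C] (w : ℕ → ℚ) (A : V → Finset C) (S : Finset C) : ℚ :=
  ∑ v, w ((S ∩ A v).card)

theorem stmt2 [Fintype V] [DecidableEq C]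
    (w : ℕ → ℚ) (hwmono : Monotone w) (hw0 : w 0 = 0) (hwnonneg : ∀ x, 0 ≤ w x)
    (k t : ℕ) (C1 D : Finset C) (hdisj : Disjoint C1 D) (hD : D.card = t)
    (A : V → Finset C) (hA : ∀ v, A v ⊆ C1 ∪ D) (hDA : ∀ v, D ⊆ A v)
    (H : Finset C) (hH : H ⊆ C1 ∪ D) (hHcard : H.card = k + t) :
    ∃ F ⊆ H \ D, F.card = k ∧ thieleScore w A H ≤ thieleScore w A (F ∪ D) := by
  have hmt : (H ∩ D).card ≤ t := hD ▸ card_le_card inter_subset_right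
  have hHD : (H \ D).card + (H ∩ D).card = H.card := card_sdiff_add_card_inter H D
  have hk : k ≤ (H \ D).card := by omega
  obtain ⟨F, hFsub, hFcard⟩ := exists_subset_card_eq hk
  refine ⟨F, hFsub, hFcard, ?_⟩
  have hFD : Disjoint F D := sdiff_disjoint.mono_left hFsub
  unfold thieleScore
  apply Finset.sum_le_sum
  intro v _
  apply hwmono
  have h1 : ((F ∪ D) ∩ A v).card = (F ∩ A v).card + t := by
    rw [union_inter_distrib_right, inter_eq_left.2 (hDA v),
      card_union_of_disjoint (hFD.mono_left inter_subset_left), hD]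
  have h2 : (H ∩ A v).card = ((H \ D) ∩ A v).card + (H ∩ D).card := by
    have heq : H ∩ A v = ((H \ D) ∩ A v) ∪ (H ∩ D) := by
      ext a
      simp only [mem_inter, mem_union, mem_sdiff]
      constructor
      · rintro ⟨ha, hav⟩
        by_cases h : a ∈ D <;> tauto
      · rintro (⟨⟨ha, -⟩, hav⟩ | ⟨ha, hd⟩)
        · exact ⟨ha, hav⟩
        · exact ⟨ha, hDA v hd⟩
    rw [heq, card_union_of_disjoint
      (sdiff_disjoint.mono inter_subset_left inter_subset_right)]
  have h3 : ((H \ D) ∩ A v).card ≤ (F ∩ A v).card + ((H \ D).card - k) := by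
    have hsub : (H \ D) ∩ A v ⊆ (F ∩ A v) ∪ ((H \ D) \ F) := by
      intro a ha
      simp only [mem_inter, mem_union, mem_sdiff] at *
      by_cases h : a ∈ F <;> tauto
    calc ((H \ D) ∩ A v).card ≤ ((F ∩ A v) ∪ ((H \ D) \ F)).card := card_le_card hsub
      _ ≤ (F ∩ A v).card + ((H \ D) \ F).card := card_union_le _ _
      _ = (F ∩ A v).card + ((H \ D).card - k) := by rw [card_sdiff_of_subset hFsub, hFcard]
  omega
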